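/- Fix a ∈ (0,1/2) and let ρ be the V-path quasi-metric on the dyadic rationals of [0,1]. For every triple z_0, z_1, z_2 of distinct points, ρ(z_1,z_2) ≤ ((1-a)/a)·(ρ(z_1,z_0) + ρ(z_0,z_2)). In particular, for any ε > 0 one may choose a close enough to 1/2 so that ρ(z_1,z_2) ≤ (1+ε)(ρ(z_1,z_0) + ρ(z_0,z_2)) for all triples. -/

import Mathlib

/-- A rational is dyadic if it can be written as `k / 2^n`. -/
def IsDyadic (q : ℚ) : Prop := ∃ (k : ℤ) (n : ℕ), q = (k : ℚ) / 2 ^ n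

/-- Membership in `Z`, the set of dyadic rationals of `[0,1]`. -/
def InZ (q : ℚ) : Prop := 0 ≤ q ∧ q ≤ 1 ∧ IsDyadic q

/-- The level of a dyadic rational: the least `n` with `q = k / 2^n` for some
integer `k`.  The endpoints `0` and `1` have level `0`. -/
noncomputable def level (q : ℚ) : ℕ := sInf {n : ℕ | ∃ k : ℤ, q = (k : ℚ) / 2 ^ n}

/-- The left neighbor `l(z) = (k-1)/2^n` of `z = k/2^n` (in lowest terms,
`k` odd, `n ≥ 1`); points of level `0` are fixed. -/
noncomputable def lnb (q : ℚ) : ℚ :=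
  if level q = 0 then q else q - (1 / 2 : ℚ) ^ level q

/-- The right neighbor `r(z) = (k+1)/2^n` of `z = k/2^n` (in lowest terms,
`k` odd, `n ≥ 1`); points of level `0` are fixed. -/
noncomputable def rnb (q : ℚ) : ℚ :=
  if level q = 0 then q else q + (1 / 2 : ℚ) ^ level q

/-- `ρ` is the V-path quasi-metric on the dyadic rationals of `[0,1]` with
parameter `a`: it is symmetric, vanishes on the diagonal, is nonnegative on
`Z`, satisfies `ρ(0,1) = 1`, and decomposes along the unique V-shaped path:
for `z < z'` in `Z` the first edge taken from the higher-level endpoint has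
length `a^level`. These properties characterize the sum of edge lengths
`a^{ℓ(w)}` along the V-shaped path joining `z` and `z'`. -/
def IsVPath (a : ℝ) (ρ : ℚ → ℚ → ℝ) : Prop :=
  (∀ z z', ρ z z' = ρ z' z) ∧
  (∀ z, ρ z z = 0) ∧
  (∀ z z', InZ z → InZ z' → 0 ≤ ρ z z') ∧
  ρ 0 1 = 1 ∧
  (∀ z z', InZ z → InZ z' → z < z' → 1 ≤ level z → level z' ≤ level z →
    ρ z z' = a ^ level z + ρ (rnb z) z') ∧
  (∀ z z', InZ z → InZ z' → z < z' → level z < level z' →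
    ρ z z' = ρ z (lnb z') + a ^ level z')

/-- `τ_n = a + a² + ⋯ + a^{n-1} + 2 a^n`. -/
noncomputable def tau (a : ℝ) (n : ℕ) : ℝ :=
  (∑ i ∈ Finset.Ico 1 n, a ^ i) + 2 * a ^ n

namespace VPaux

lemma half_pow (n : ℕ) : (1/2 : ℚ)^n = 1/2^n := by rw [div_pow, one_pow]

lemma level_le {q : ℚ} {n : ℕ} (k : ℤ) (h : q = (k:ℚ)/2^n) : level q ≤ n :=
  Nat.sInf_le ⟨k, h⟩

lemma level_spec {q : ℚ} (h : IsDyadic q) : ∃ k : ℤ, q = (k:ℚ) / 2 ^ level q := by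
  obtain ⟨k, n, hk⟩ := h
  exact Nat.sInf_mem (⟨n, k, hk⟩ : {n : ℕ | ∃ k : ℤ, q = (k:ℚ)/2^n}.Nonempty)

lemma rep_eq {k k' : ℤ} {n n' : ℕ} (h : (k:ℚ)/2^n = (k':ℚ)/2^n') :
    k * 2^n' = k' * 2^n := by
  have h2 : ((2:ℚ))^n ≠ 0 := by positivity
  have h2' : ((2:ℚ))^n' ≠ 0 := by positivity
  field_simp at h
  exact_mod_cast (by linear_combination h : (k:ℚ) * 2^n' = k' * 2^n)

lemma half_rep {m : ℤ} {n : ℕ} (h1 : 1 ≤ n) :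
    ((2*m : ℤ):ℚ)/2^n = (m:ℚ)/2^(n-1) := by
  have h2 : (2:ℚ)^(n-1) ≠ 0 := by positivity
  rw [show n = (n-1)+1 by omega, pow_succ]
  push_cast
  field_simp

lemma level_odd {k : ℤ} (hk : Odd k) (n : ℕ) : level ((k:ℚ)/2^n) = n := by
  refine le_antisymm (level_le k rfl) ?_
  by_contra hlt
  push_neg at hlt
  obtain ⟨k', hk'⟩ := level_spec ⟨k, n, rfl⟩
  set m := level ((k:ℚ)/2^n) with hm
  have he : k * 2^m = k' * 2^n := rep_eq hk'
  have hn2 : (2:ℤ)^n = 2^(n-m)*2^m := by rw [← pow_add]; congr 1; omega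
  have hkk : k = k' * 2^(n-m) := by
    have h2 : (2:ℤ)^m ≠ 0 := by positivity
    refine mul_right_cancel₀ h2 ?_
    rw [he, hn2]; ring
  have : (2:ℤ) ∣ k := by
    rw [hkk]
    exact Dvd.dvd.mul_left (dvd_pow_self 2 (by omega : n - m ≠ 0)) k'
  rw [Int.odd_iff] at hk
  omega

lemma level_rep {q : ℚ} {n : ℕ} (h : IsDyadic q) (hn : level q = n) (h1 : 1 ≤ n) :
    ∃ k : ℤ, Odd k ∧ q = (k:ℚ) / 2 ^ n := by
  obtain ⟨k, hk⟩ := level_spec h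
  rw [hn] at hk
  refine ⟨k, ?_, hk⟩
  by_contra hev
  rw [Int.not_odd_iff_even] at hev
  obtain ⟨m, hm⟩ := hev
  have : q = (m:ℚ) / 2 ^ (n - 1) := by
    rw [hk, show k = 2*m by omega]
    exact half_rep h1
  have := level_le m this
  omega

lemma lnb_eq {q : ℚ} {k : ℤ} {n : ℕ} (hn : level q = n) (h1 : 1 ≤ n)
    (hq : q = (k:ℚ)/2^n) : lnb q = ((k-1 : ℤ):ℚ)/2^n := by
  unfold lnb
  rw [hn, if_neg (by omega), half_pow, hq]
  push_cast
  ring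

lemma rnb_eq {q : ℚ} {k : ℤ} {n : ℕ} (hn : level q = n) (h1 : 1 ≤ n)
    (hq : q = (k:ℚ)/2^n) : rnb q = ((k+1 : ℤ):ℚ)/2^n := by
  unfold rnb
  rw [hn, if_neg (by omega), half_pow, hq]
  push_cast
  ring

lemma level_lnb_le {q : ℚ} {n : ℕ} (h : IsDyadic q) (hn : level q = n) (h1 : 1 ≤ n) :
    level (lnb q) ≤ n - 1 := by
  obtain ⟨k, hk, hq⟩ := level_rep h hn h1
  obtain ⟨m, hm⟩ : ∃ m : ℤ, k - 1 = 2*m := by rcases hk with ⟨m, hm⟩; exact ⟨m, by omega⟩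
  have he : lnb q = (m:ℚ)/2^(n-1) := by
    rw [lnb_eq hn h1 hq, hm]; exact half_rep h1
  exact level_le m he

lemma level_rnb_le {q : ℚ} {n : ℕ} (h : IsDyadic q) (hn : level q = n) (h1 : 1 ≤ n) :
    level (rnb q) ≤ n - 1 := by
  obtain ⟨k, hk, hq⟩ := level_rep h hn h1
  obtain ⟨m, hm⟩ : ∃ m : ℤ, k + 1 = 2*m := by rcases hk with ⟨m, hm⟩; exact ⟨m+1, by omega⟩
  have he : rnb q = (m:ℚ)/2^(n-1) := by
    rw [rnb_eq hn h1 hq, hm]; exact half_rep h1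
  exact level_le m he

lemma lnb_lt {q : ℚ} (h1 : 1 ≤ level q) : lnb q < q := by
  unfold lnb
  rw [if_neg (by omega)]
  have : (0:ℚ) < (1/2)^level q := by positivity
  linarith

lemma lt_rnb {q : ℚ} (h1 : 1 ≤ level q) : q < rnb q := by
  unfold rnb
  rw [if_neg (by omega)]
  have : (0:ℚ) < (1/2)^level q := by positivity
  linarith

lemma level_zero_cases {q : ℚ} (h : InZ q) (h0 : level q = 0) : q = 0 ∨ q = 1 := by
  obtain ⟨k, hk⟩ := level_spec h.2.2
  rw [h0] at hk
  norm_num at hk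
  have h0q : (0:ℚ) ≤ (k:ℚ) := by rw [← hk]; exact h.1
  have h1q : ((k:ℤ):ℚ) ≤ 1 := by rw [← hk]; exact h.2.1
  have hk0 : (0:ℤ) ≤ k := by exact_mod_cast h0q
  have hk1 : (k:ℤ) ≤ 1 := by exact_mod_cast h1q
  interval_cases k
  · left; rw [hk]; norm_num
  · right; rw [hk]; norm_num

lemma level_pos_ne {q : ℚ} (h : InZ q) (h0 : q ≠ 0) (h1 : q ≠ 1) : 1 ≤ level q := by
  by_contra hc
  push_neg at hc
  rcases level_zero_cases h (by omega) with h' | h' <;> tauto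

lemma inZ_lnb {q : ℚ} (h : InZ q) : InZ (lnb q) := by
  by_cases h0 : level q = 0
  · unfold lnb; rw [if_pos h0]; exact h
  · have h1 : 1 ≤ level q := by omega
    obtain ⟨k, hk, hq⟩ := level_rep h.2.2 rfl h1
    have hle := lnb_eq rfl h1 hq
    have hkpos : 1 ≤ k := by
      have : (0:ℚ) ≤ (k:ℚ)/2^(level q) := hq ▸ h.1
      have h2 : (0:ℚ) < 2^(level q) := by positivity
      have : (0:ℚ) ≤ (k:ℚ) := by
        by_contra hc; push_neg at hc
        have := div_neg_of_neg_of_pos hc h2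
        linarith
      have : (0:ℤ) ≤ k := by exact_mod_cast this
      rcases hk with ⟨m, hm⟩; omega
    refine ⟨?_, ?_, k-1, level q, hle⟩
    · rw [hle]
      apply div_nonneg ?_ (by positivity)
      exact_mod_cast (by omega : (0:ℤ) ≤ k - 1)
    · have := lnb_lt h1
      linarith [h.2.1]

lemma inZ_rnb {q : ℚ} (h : InZ q) : InZ (rnb q) := by
  by_cases h0 : level q = 0
  · unfold rnb; rw [if_pos h0]; exact h
  · have h1 : 1 ≤ level q := by omega
    obtain ⟨k, hk, hq⟩ := level_rep h.2.2 rfl h1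
    have hre := rnb_eq rfl h1 hq
    have hkle : k + 1 ≤ 2^(level q) := by
      have hq1 : (k:ℚ)/2^(level q) ≤ 1 := hq ▸ h.2.1
      have h2 : (0:ℚ) < 2^(level q) := by positivity
      have hk2 : (k:ℚ) ≤ 2^(level q) := by
        rw [div_le_one h2] at hq1; exact_mod_cast hq1
      have hk2' : k ≤ 2^(level q) := by exact_mod_cast hk2
      have : k ≠ 2^(level q) := by
        intro he
        rcases hk with ⟨m, hm⟩
        have : (2:ℤ) ∣ 2^(level q) := dvd_pow_self 2 (by omega : level q ≠ 0)
        omega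
      omega
    refine ⟨?_, ?_, k+1, level q, hre⟩
    · have := lt_rnb h1
      linarith [h.1]
    · rw [hre]
      have h2 : (0:ℚ) < 2^(level q) := by positivity
      rw [div_le_one h2]
      have : ((k+1:ℤ):ℚ) ≤ ((2^(level q) : ℤ):ℚ) := by exact_mod_cast hkle
      push_cast at this ⊢
      linarith

lemma rep_up {j : ℤ} {m n : ℕ} (h : m ≤ n) :
    ((j:ℚ))/2^m = ((j * 2^(n-m) : ℤ):ℚ)/2^n := by
  have h2 : (2:ℚ)^m ≠ 0 := by positivity
  have h2' : (2:ℚ)^n ≠ 0 := by positivity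
  have hp : (2:ℚ)^n = 2^(n-m) * 2^m := by rw [← pow_add]; congr 1; omega
  rw [div_eq_div_iff h2 h2', hp]
  push_cast
  ring

/-- any dyadic `v < q` with `level v ≤ level q` satisfies `v ≤ lnb q` -/
lemma le_lnb {v q : ℚ} (hv : IsDyadic v) (hq : IsDyadic q) (hlt : v < q)
    (hl : level v ≤ level q) (h1 : 1 ≤ level q) : v ≤ lnb q := by
  obtain ⟨m, hm⟩ : ∃ m, level v = m := ⟨_, rfl⟩
  obtain ⟨n, hn⟩ : ∃ n, level q = n := ⟨_, rfl⟩
  rw [hm, hn] at hl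
  rw [hn] at h1
  obtain ⟨j, hj⟩ := level_spec hv
  rw [hm] at hj
  obtain ⟨k, hk, hqr⟩ := level_rep hq hn h1
  have hvJ : v = ((j * 2^(n - m) : ℤ):ℚ)/2^n := by rw [hj]; exact rep_up hl
  have h2 : (0:ℚ) < 2^n := by positivity
  have hJk : (j * 2^(n - m) : ℤ) < k := by
    have h4 : ((j * 2^(n - m) : ℤ):ℚ)/2^n < (k:ℚ)/2^n := by
      rw [← hvJ, ← hqr]; exact hlt
    have h5 := (div_lt_div_iff_of_pos_right h2).mp h4
    exact_mod_cast h5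
  rw [lnb_eq hn h1 hqr, hvJ]
  gcongr
  exact_mod_cast (by omega : (j * 2^(n - m) : ℤ) ≤ k - 1)

lemma rnb_le {v q : ℚ} (hv : IsDyadic v) (hq : IsDyadic q) (hlt : q < v)
    (hl : level v ≤ level q) (h1 : 1 ≤ level q) : rnb q ≤ v := by
  obtain ⟨m, hm⟩ : ∃ m, level v = m := ⟨_, rfl⟩
  obtain ⟨n, hn⟩ : ∃ n, level q = n := ⟨_, rfl⟩
  rw [hm, hn] at hl
  rw [hn] at h1
  obtain ⟨j, hj⟩ := level_spec hv
  rw [hm] at hj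
  obtain ⟨k, hk, hqr⟩ := level_rep hq hn h1
  have hvJ : v = ((j * 2^(n - m) : ℤ):ℚ)/2^n := by rw [hj]; exact rep_up hl
  have h2 : (0:ℚ) < 2^n := by positivity
  have hJk : k < (j * 2^(n - m) : ℤ) := by
    have h4 : (k:ℚ)/2^n < ((j * 2^(n - m) : ℤ):ℚ)/2^n := by
      rw [← hvJ, ← hqr]; exact hlt
    have h5 := (div_lt_div_iff_of_pos_right h2).mp h4
    exact_mod_cast h5
  rw [rnb_eq hn h1 hqr, hvJ]
  gcongr
  exact_mod_cast (by omega : (k + 1 : ℤ) ≤ j * 2^(n - m))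


lemma lnb_val {q : ℚ} (h1 : 1 ≤ level q) : lnb q = q - (1/2)^level q := by
  unfold lnb; rw [if_neg (by omega)]

lemma rnb_val {q : ℚ} (h1 : 1 ≤ level q) : rnb q = q + (1/2)^level q := by
  unfold rnb; rw [if_neg (by omega)]

lemma dyadic_rep {q : ℚ} {k : ℤ} {n : ℕ} (h : q = (k:ℚ)/2^n) : IsDyadic q := ⟨k, n, h⟩

lemma level_add_pow {x : ℚ} (hx : IsDyadic x) {t : ℕ} (h : level x < t) :
    level (x + (1/2)^t) = t := by
  obtain ⟨m, hm⟩ := level_spec hx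
  obtain ⟨e, he⟩ : ∃ e, level x = e := ⟨_, rfl⟩
  rw [he] at hm h
  have hv : x + (1/2)^t = ((m * 2^(t-e) + 1 : ℤ):ℚ)/2^t := by
    rw [hm, half_pow, rep_up (le_of_lt h)]
    push_cast
    rw [← add_div]
  rw [hv]
  apply level_odd
  obtain ⟨d, hd⟩ : ∃ d, t - e = d + 1 := ⟨t-e-1, by omega⟩
  refine ⟨m * 2^d, ?_⟩
  rw [hd]
  ring

lemma level_sub_pow {x : ℚ} (hx : IsDyadic x) {t : ℕ} (h : level x < t) :
    level (x - (1/2)^t) = t := by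
  obtain ⟨m, hm⟩ := level_spec hx
  obtain ⟨e, he⟩ : ∃ e, level x = e := ⟨_, rfl⟩
  rw [he] at hm h
  have hv : x - (1/2)^t = ((m * 2^(t-e) - 1 : ℤ):ℚ)/2^t := by
    rw [hm, half_pow, rep_up (le_of_lt h)]
    push_cast
    rw [div_sub_div_same]
  rw [hv]
  apply level_odd
  obtain ⟨d, hd⟩ : ∃ d, t - e = d + 1 := ⟨t-e-1, by omega⟩
  refine ⟨m * 2^d - 1, ?_⟩
  rw [hd]
  ring

/-- one of the two neighbors has level exactly `level q - 1` -/
lemma nb_level {q : ℚ} (h : IsDyadic q) (h1 : 1 ≤ level q) :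
    level (lnb q) = level q - 1 ∨ level (rnb q) = level q - 1 := by
  obtain ⟨n, hn⟩ : ∃ n, level q = n := ⟨_, rfl⟩
  rw [hn] at h1 ⊢
  obtain ⟨k, hk, hq⟩ := level_rep h hn h1
  obtain ⟨j, hj⟩ := hk
  have hl : lnb q = (j:ℚ)/2^(n-1) := by
    rw [lnb_eq hn h1 hq, show k - 1 = 2*j by omega]
    exact half_rep h1
  have hr : rnb q = ((j+1 : ℤ):ℚ)/2^(n-1) := by
    rw [rnb_eq hn h1 hq, show k + 1 = 2*(j+1) by omega]
    exact half_rep h1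
  rcases Int.even_or_odd j with hev | hod
  · right
    rw [hr]
    apply level_odd
    rcases hev with ⟨i, hi⟩; exact ⟨i, by omega⟩
  · left
    rw [hl]
    exact level_odd hod _

lemma level_reflect (q : ℚ) : level (1 - q) = level q := by
  have key : ∀ (x : ℚ) (n : ℕ), (∃ k : ℤ, x = (k:ℚ)/2^n) → ∃ k : ℤ, 1 - x = (k:ℚ)/2^n := by
    rintro x n ⟨k, hk⟩
    refine ⟨2^n - k, ?_⟩
    rw [hk]
    have h2 : (2:ℚ)^n ≠ 0 := by positivity
    push_cast
    field_simp
  unfold level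
  congr 1
  ext n
  constructor
  · intro h
    have := key _ n h
    simpa using this
  · intro h
    exact key _ n h

lemma inZ_reflect {q : ℚ} (h : InZ q) : InZ (1 - q) := by
  refine ⟨by linarith [h.2.1], by linarith [h.1], ?_⟩
  obtain ⟨k, n, hk⟩ := h.2.2
  refine ⟨2^n - k, n, ?_⟩
  rw [hk]
  have h2 : (2:ℚ)^n ≠ 0 := by positivity
  push_cast
  field_simp

lemma lnb_reflect (q : ℚ) : lnb (1 - q) = 1 - rnb q := by
  unfold lnb rnb
  rw [level_reflect]
  split
  · rfl
  · ring

lemma rnb_reflect (q : ℚ) : rnb (1 - q) = 1 - lnb q := by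
  unfold lnb rnb
  rw [level_reflect]
  split
  · rfl
  · ring

lemma inZ_zero : InZ 0 := ⟨le_refl _, by norm_num, 0, 0, by norm_num⟩
lemma inZ_one : InZ 1 := ⟨by norm_num, le_refl _, 1, 0, by norm_num⟩

lemma level_one : level (1:ℚ) = 0 :=
  Nat.le_zero.mp (level_le 1 (by norm_num))

lemma level_zero : level (0:ℚ) = 0 :=
  Nat.le_zero.mp (level_le 0 (by norm_num))


section Rho

variable {a : ℝ} {ρ : ℚ → ℚ → ℝ}

lemma vsym (h : IsVPath a ρ) : ∀ z z', ρ z z' = ρ z' z := h.1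
lemma vdiag (h : IsVPath a ρ) : ∀ z, ρ z z = 0 := h.2.1
lemma vnn (h : IsVPath a ρ) : ∀ z z', InZ z → InZ z' → 0 ≤ ρ z z' := h.2.2.1
lemma v01 (h : IsVPath a ρ) : ρ 0 1 = 1 := h.2.2.2.1
lemma vr5 (h : IsVPath a ρ) : ∀ z z', InZ z → InZ z' → z < z' → 1 ≤ level z →
    level z' ≤ level z → ρ z z' = a ^ level z + ρ (rnb z) z' := h.2.2.2.2.1
lemma vr6 (h : IsVPath a ρ) : ∀ z z', InZ z → InZ z' → z < z' → level z < level z' →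
    ρ z z' = ρ z (lnb z') + a ^ level z' := h.2.2.2.2.2

/-- generalized left reduction -/
lemma r5'_aux (h : IsVPath a ρ) (N : ℕ) :
    ∀ x y : ℚ, level y ≤ N → InZ x → InZ y → x < y → 1 ≤ level x → rnb x ≤ y →
    ρ x y = a ^ level x + ρ (rnb x) y := by
  induction N with
  | zero =>
    intro x y hN hx hy hxy h1 hr
    exact vr5 h x y hx hy hxy h1 (by omega)
  | succ N IH =>
    intro x y hN hx hy hxy h1 hr
    by_cases hc : level y ≤ level x
    · exact vr5 h x y hx hy hxy h1 hc
    · push_neg at hc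
      have hy1 : 1 ≤ level y := by omega
      have hrlev := level_rnb_le hx.2.2 rfl h1
      have hrny : rnb x ≠ y := by
        intro he
        rw [he] at hrlev
        omega
      have hrl : level (rnb x) ≤ level y := by omega
      have hrle : rnb x ≤ lnb y :=
        le_lnb (inZ_rnb hx).2.2 hy.2.2 (lt_of_le_of_ne hr hrny) hrl hy1
      have hxl : x < lnb y := lt_of_lt_of_le (lt_rnb h1) hrle
      have hlz : InZ (lnb y) := inZ_lnb hy
      have hlev : level (lnb y) ≤ N := by
        have := level_lnb_le hy.2.2 rfl hy1
        omega
      have e1 := IH x (lnb y) hlev hx hlz hxl h1 hrle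
      have e2 := vr6 h x y hx hy hxy hc
      have e3 := vr6 h (rnb x) y (inZ_rnb hx) hy (lt_of_le_of_ne hr hrny) (by
        have := level_rnb_le hx.2.2 rfl h1
        omega)
      rw [e2, e1, e3]
      ring

lemma r5' (h : IsVPath a ρ) {x y : ℚ} (hx : InZ x) (hy : InZ y) (hxy : x < y)
    (h1 : 1 ≤ level x) (hr : rnb x ≤ y) :
    ρ x y = a ^ level x + ρ (rnb x) y :=
  r5'_aux h (level y) x y le_rfl hx hy hxy h1 hr

/-- generalized right reduction -/
lemma r6'_aux (h : IsVPath a ρ) (N : ℕ) :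
    ∀ x y : ℚ, level x ≤ N → InZ x → InZ y → x < y → 1 ≤ level y → x ≤ lnb y →
    ρ x y = ρ x (lnb y) + a ^ level y := by
  induction N with
  | zero =>
    intro x y hN hx hy hxy h1 hl
    exact vr6 h x y hx hy hxy (by omega)
  | succ N IH =>
    intro x y hN hx hy hxy h1 hl
    by_cases hc : level x < level y
    · exact vr6 h x y hx hy hxy hc
    · push_neg at hc
      have hx1 : 1 ≤ level x := by omega
      have hxny : x ≠ lnb y := by
        intro he
        have := level_lnb_le hy.2.2 rfl h1
        rw [← he] at this
        omega
      have hxlt : x < lnb y := lt_of_le_of_ne hl hxny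
      have hrle : rnb x ≤ lnb y := by
        apply rnb_le (inZ_lnb hy).2.2 hx.2.2 hxlt ?_ hx1
        have := level_lnb_le hy.2.2 rfl h1
        omega
      have e1 := vr5 h x (lnb y) hx (inZ_lnb hy) hxlt hx1 (by
        have := level_lnb_le hy.2.2 rfl h1
        omega)
      have hrny : rnb x < y := lt_of_le_of_lt hrle (lnb_lt h1)
      have e2 := IH (rnb x) y (by have := level_rnb_le hx.2.2 rfl hx1; omega)
        (inZ_rnb hx) hy hrny h1 hrle
      have e3 := vr5 h x y hx hy hxy hx1 hc
      rw [e3, e2, e1]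
      ring

lemma r6' (h : IsVPath a ρ) {x y : ℚ} (hx : InZ x) (hy : InZ y) (hxy : x < y)
    (h1 : 1 ≤ level y) (hl : x ≤ lnb y) :
    ρ x y = ρ x (lnb y) + a ^ level y :=
  r6'_aux h (level x) x y le_rfl hx hy hxy h1 hl

lemma sub_sub_self' (q : ℚ) : 1 - (1 - q) = q := by ring

/-- reflection preserves being a V-path -/
lemma reflect_vpath (h : IsVPath a ρ) : IsVPath a (fun x y => ρ (1-x) (1-y)) := by
  refine ⟨?_, ?_, ?_, ?_, ?_, ?_⟩
  · intro z z'; exact vsym h _ _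
  · intro z; exact vdiag h _
  · intro z z' hz hz'; exact vnn h _ _ (inZ_reflect hz) (inZ_reflect hz')
  · show ρ (1-0) (1-1) = 1
    norm_num
    rw [vsym h]
    exact v01 h
  · intro z z' hz hz' hlt h1 hle
    show ρ (1-z) (1-z') = a ^ level z + ρ (1 - rnb z) (1 - z')
    have hrle : rnb z ≤ z' := rnb_le hz'.2.2 hz.2.2 hlt hle h1
    have e1 : ρ (1-z') (1-z) = ρ (1-z') (lnb (1-z)) + a ^ level (1-z) := by
      apply r6' h (inZ_reflect hz') (inZ_reflect hz) (by linarith)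
      · rw [level_reflect]; exact h1
      · rw [lnb_reflect]; linarith
    rw [vsym h (1-z) (1-z'), e1, lnb_reflect, level_reflect,
      vsym h (1-z') (1 - rnb z)]
    ring
  · intro z z' hz hz' hlt hle
    show ρ (1-z) (1-z') = ρ (1-z) (1 - lnb z') + a ^ level z'
    have h1' : 1 ≤ level z' := by omega
    have hlle : z ≤ lnb z' := le_lnb hz.2.2 hz'.2.2 hlt (by omega) h1'
    have e1 : ρ (1-z') (1-z) = a ^ level (1-z') + ρ (rnb (1-z')) (1-z) := by
      apply r5' h (inZ_reflect hz') (inZ_reflect hz) (by linarith)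
      · rw [level_reflect]; exact h1'
      · rw [rnb_reflect]; linarith
    rw [vsym h (1-z) (1-z'), e1, rnb_reflect, level_reflect,
      vsym h (1 - lnb z') (1-z)]
    ring

/-- lower bound: one edge -/
lemma rho_lower (h : IsVPath a ρ) (ha0 : 0 < a) {x y : ℚ} (hx : InZ x) (hy : InZ y)
    (hxy : x < y) : a ^ (max (level x) (level y)) ≤ ρ x y := by
  have ha0' : (0:ℝ) ≤ a := le_of_lt ha0
  by_cases hc : 1 ≤ level x ∧ level y ≤ level x
  · rw [vr5 h x y hx hy hxy hc.1 hc.2, max_eq_left hc.2]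
    have := vnn h (rnb x) y (inZ_rnb hx) hy
    linarith
  · by_cases hc2 : level x < level y
    · rw [vr6 h x y hx hy hxy hc2, max_eq_right (le_of_lt hc2)]
      have := vnn h x (lnb y) hx (inZ_lnb hy)
      linarith
    · have hx0 : level x = 0 := by omega
      have hy0 : level y = 0 := by omega
      have e1 : x = 0 := by
        rcases level_zero_cases hx hx0 with h' | h'
        · exact h'
        · exfalso; rw [h'] at hxy; linarith [hy.2.1]
      have e2 : y = 1 := by
        rcases level_zero_cases hy hy0 with h' | h'
        · exfalso; rw [h'] at hxy; linarith [hx.1]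
        · exact h'
      rw [hx0, hy0, e1, e2, v01 h]
      norm_num

end Rho


section Rho2

variable {a : ℝ} {ρ : ℚ → ℚ → ℝ}

lemma lnb_level0 {q : ℚ} (h : level q = 0) : lnb q = q := by
  unfold lnb; rw [if_pos h]

lemma rnb_level0 {q : ℚ} (h : level q = 0) : rnb q = q := by
  unfold rnb; rw [if_pos h]

lemma K_one (ha0 : 0 < a) (ha : a < 1/2) : 1 ≤ (1-a)/a := by
  rw [le_div_iff₀ ha0]; linarith

lemma K_pos (ha0 : 0 < a) (ha : a < 1/2) : 0 < (1-a)/a := by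
  apply div_pos <;> linarith

lemma key_pow (ha0 : 0 < a) {n : ℕ} (h1 : 1 ≤ n) :
    (1-a)/a * a^n + a^n = a^(n-1) := by
  obtain ⟨d, hd⟩ : ∃ d, n = d + 1 := ⟨n-1, by omega⟩
  have hane : a ≠ 0 := ne_of_gt ha0
  rw [hd, pow_succ, Nat.add_sub_cancel]
  field_simp
  ring

lemma geo_le (ha0 : 0 < a) (ha : a < 1/2) (e n : ℕ) :
    (∑ i ∈ Finset.Ico (e+1) (n+1), a^i) ≤ (1-a)/a * a^e := by
  have h1a : 0 < 1 - a := by linarith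
  rcases le_or_gt (n+1) (e+1) with hle | hlt
  · rw [Finset.Ico_eq_empty (by omega)]
    simp
    positivity
  · have hne : a ≠ 1 := by intro he; rw [he] at ha; linarith
    rw [geom_sum_Ico' hne (by omega), div_mul_eq_mul_div, div_le_div_iff₀ h1a ha0]
    have he' : a^(e+1) = a^e * a := pow_succ a e
    have hnn : 0 ≤ a^(n+1) := by positivity
    have hee : 0 ≤ a^e := by positivity
    nlinarith [mul_le_mul_of_nonneg_left (le_of_lt ha) hee]

lemma passage_r_aux (h : IsVPath a ρ) (N : ℕ) :
    ∀ x w y : ℚ, level y ≤ N → InZ x → InZ w → InZ y → x ≤ w → w ≤ y →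
    (∀ v, InZ v → w < v → v ≤ y → level w < level v) →
    ρ x y = ρ x w + ρ w y := by
  induction N with
  | zero =>
    intro x w y hN hx hw hy hxw hwy hRA
    rcases eq_or_lt_of_le hxw with he | hxw'
    · rw [← he, vdiag h]; ring
    · rcases eq_or_lt_of_le hwy with he | hwy'
      · rw [he, vdiag h]; ring
      · exfalso; have := hRA y hy hwy' le_rfl; omega
  | succ N IH =>
    intro x w y hN hx hw hy hxw hwy hRA
    rcases eq_or_lt_of_le hxw with he | hxw'
    · rw [← he, vdiag h]; ring
    · rcases eq_or_lt_of_le hwy with he | hwy'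
      · rw [he, vdiag h]; ring
      · have hxy : x < y := lt_trans hxw' hwy'
        have hwlev : level w < level y := hRA y hy hwy' le_rfl
        have hy1 : 1 ≤ level y := by omega
        have hwl : w ≤ lnb y := le_lnb hw.2.2 hy.2.2 hwy' (le_of_lt hwlev) hy1
        have e1 : ρ x y = ρ x (lnb y) + a ^ level y :=
          r6' h hx hy hxy hy1 (le_trans (le_of_lt hxw') hwl)
        have e2 : ρ w y = ρ w (lnb y) + a ^ level y :=
          r6' h hw hy hwy' hy1 hwl
        have e3 : ρ x (lnb y) = ρ x w + ρ w (lnb y) := by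
          apply IH x w (lnb y) ?_ hx hw (inZ_lnb hy) (le_of_lt hxw') hwl
          · intro v hv h1 h2
            exact hRA v hv h1 (le_trans h2 (le_of_lt (lnb_lt hy1)))
          · have := level_lnb_le hy.2.2 rfl hy1
            omega
        rw [e1, e3, e2]
        ring

lemma passage_r (h : IsVPath a ρ) {x w y : ℚ} (hx : InZ x) (hw : InZ w) (hy : InZ y)
    (hxw : x ≤ w) (hwy : w ≤ y)
    (hRA : ∀ v, InZ v → w < v → v ≤ y → level w < level v) :
    ρ x y = ρ x w + ρ w y :=
  passage_r_aux h (level y) x w y le_rfl hx hw hy hxw hwy hRA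

lemma passage_l (h : IsVPath a ρ) {x w y : ℚ} (hx : InZ x) (hw : InZ w) (hy : InZ y)
    (hxw : x ≤ w) (hwy : w ≤ y)
    (hRA : ∀ v, InZ v → x ≤ v → v < w → level w < level v) :
    ρ x y = ρ x w + ρ w y := by
  have h' := reflect_vpath h
  have := passage_r h' (x := 1-y) (w := 1-w) (y := 1-x)
    (inZ_reflect hy) (inZ_reflect hw) (inZ_reflect hx)
    (by linarith) (by linarith) ?_
  · simp only [sub_sub_cancel] at this
    rw [vsym h x y, vsym h x w]
    calc ρ y x = ρ y w + ρ w x := this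
    _ = ρ w x + ρ y w := by ring
    _ = ρ w x + ρ w y := by rw [vsym h y w]
  · intro v hv h1 h2
    have hv' : InZ (1 - v) := inZ_reflect hv
    have h3 := hRA (1-v) hv' (by linarith) (by linarith)
    rw [level_reflect] at h3
    rw [level_reflect]
    exact h3

lemma ubl_aux (h : IsVPath a ρ) (ha0 : 0 < a) (N : ℕ) :
    ∀ x w : ℚ, level x ≤ N → InZ x → InZ w → x ≤ w → ∀ e : ℕ, level w ≤ e →
    (∀ v, InZ v → x ≤ v → v < w → e < level v) →
    ρ x w ≤ ∑ i ∈ Finset.Ico (e+1) (level x + 1), a^i := by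
  induction N with
  | zero =>
    intro x w hN hx hw hxw e hwe hRA
    rcases eq_or_lt_of_le hxw with he | hxw'
    · rw [he, vdiag h]
      exact Finset.sum_nonneg (fun i _ => pow_nonneg (le_of_lt ha0) i)
    · exfalso
      have := hRA x hx le_rfl hxw'
      omega
  | succ N IH =>
    intro x w hN hx hw hxw e hwe hRA
    rcases eq_or_lt_of_le hxw with he | hxw'
    · rw [he, vdiag h]
      exact Finset.sum_nonneg (fun i _ => pow_nonneg (le_of_lt ha0) i)
    · have hxe : e < level x := hRA x hx le_rfl hxw'
      have hx1 : 1 ≤ level x := by omega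
      have hrle : rnb x ≤ w := rnb_le hw.2.2 hx.2.2 hxw' (by omega) hx1
      have hrlev := level_rnb_le hx.2.2 rfl hx1
      have e1 : ρ x w = a ^ level x + ρ (rnb x) w := r5' h hx hw hxw' hx1 hrle
      have e2 : ρ (rnb x) w ≤ ∑ i ∈ Finset.Ico (e+1) (level (rnb x) + 1), a^i := by
        apply IH (rnb x) w (by omega) (inZ_rnb hx) hw hrle e hwe
        intro v hv h1 h2
        exact hRA v hv (le_trans (le_of_lt (lt_rnb hx1)) h1) h2
      have hsub : (∑ i ∈ Finset.Ico (e+1) (level (rnb x) + 1), a^i) ≤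
          ∑ i ∈ Finset.Ico (e+1) (level x), a^i := by
        apply Finset.sum_le_sum_of_subset_of_nonneg
        · exact Finset.Ico_subset_Ico le_rfl (by omega)
        · intro i _ _; exact pow_nonneg (le_of_lt ha0) i
      have hsplit : (∑ i ∈ Finset.Ico (e+1) (level x + 1), a^i) =
          (∑ i ∈ Finset.Ico (e+1) (level x), a^i) + a^(level x) :=
        Finset.sum_Ico_succ_top (by omega) _
      rw [e1, hsplit]
      linarith

lemma ubl (h : IsVPath a ρ) (ha0 : 0 < a) {x w : ℚ} (hx : InZ x) (hw : InZ w)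
    (hxw : x ≤ w) {e : ℕ} (hwe : level w ≤ e)
    (hRA : ∀ v, InZ v → x ≤ v → v < w → e < level v) :
    ρ x w ≤ ∑ i ∈ Finset.Ico (e+1) (level x + 1), a^i :=
  ubl_aux h ha0 (level x) x w le_rfl hx hw hxw e hwe hRA

lemma ubr (h : IsVPath a ρ) (ha0 : 0 < a) {w y : ℚ} (hw : InZ w) (hy : InZ y)
    (hwy : w ≤ y) {e : ℕ} (hwe : level w ≤ e)
    (hRA : ∀ v, InZ v → w < v → v ≤ y → e < level v) :
    ρ w y ≤ ∑ i ∈ Finset.Ico (e+1) (level y + 1), a^i := by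
  have h' := reflect_vpath h
  have := ubl h' ha0 (x := 1-y) (w := 1-w)
    (inZ_reflect hy) (inZ_reflect hw) (by linarith)
    (e := e) (by rw [level_reflect]; exact hwe) ?_
  · simp only [sub_sub_cancel] at this
    rw [level_reflect] at this
    rwa [vsym h w y]
  · intro v hv h1 h2
    have := hRA (1-v) (inZ_reflect hv) (by linarith) (by linarith)
    rwa [level_reflect] at this

end Rho2


section Rho3

variable {a : ℝ} {ρ : ℚ → ℚ → ℝ}

lemma half_lt_half {e n : ℕ} (h : e < n) : (1/2:ℚ)^n < (1/2)^e :=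
  pow_lt_pow_right_of_lt_one₀ (by norm_num) (by norm_num) h

lemma half_succ (n : ℕ) : (1/2:ℚ)^n + (1/2)^n = (1/2)^(n-1) + if n = 0 then 1 else 0 := by
  rcases Nat.eq_zero_or_pos n with h | h
  · subst h; norm_num
  · rw [if_neg (by omega)]
    obtain ⟨d, hd⟩ : ∃ d, n = d + 1 := ⟨n-1, by omega⟩
    rw [hd, Nat.add_sub_cancel, pow_succ]
    ring

lemma re_aux (h : IsVPath a ρ) (ha0 : 0 < a) (ha : a < 1/2) (N : ℕ) :
    ∀ q : ℚ, level q ≤ N → InZ q → 1 ≤ level (lnb q) →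
    a ^ level (lnb q) ≤ (1-a)/a * ρ (rnb q) (rnb (lnb q)) + a ^ (level q - 1) := by
  induction N with
  | zero =>
    intro q hN hq h1
    exfalso
    rw [lnb_level0 (by omega)] at h1
    omega
  | succ N IH =>
    intro q hN hq h1
    have hq1 : 1 ≤ level q := by
      by_contra hc
      push_neg at hc
      rw [lnb_level0 (by omega)] at h1
      omega
    have helev := level_lnb_le hq.2.2 rfl hq1
    obtain ⟨n, hn⟩ : ∃ n, level q = n := ⟨_, rfl⟩
    obtain ⟨e, he⟩ : ∃ e, level (lnb q) = e := ⟨_, rfl⟩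
    rw [hn, he] at helev ⊢
    rw [he] at h1
    rw [hn] at hq1 hN
    have hlnbZ : InZ (lnb q) := inZ_lnb hq
    rcases eq_or_lt_of_le (show e + 1 ≤ n by omega) with hcase | hcase
    · -- n = e + 1 : rnb (lnb q) = rnb q
      have hval : rnb (lnb q) = rnb q := by
        have t1 : rnb (lnb q) = lnb q + (1/2:ℚ)^e := by
          rw [rnb_val (by rw [he]; omega), he]
        have t2 : lnb q = q - (1/2:ℚ)^n := by
          rw [lnb_val (by rw [hn]; omega), hn]
        have t3 : rnb q = q + (1/2:ℚ)^n := by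
          rw [rnb_val (by rw [hn]; omega), hn]
        rw [t1, t2, t3, ← hcase, pow_succ]
        ring
      rw [hval, vdiag h]
      have : a ^ (n-1) = a ^ e := by rw [← hcase, Nat.add_sub_cancel]
      rw [this]
      simp
    · -- n ≥ e + 2
      set q' := rnb q with hq'def
      have hq'v : q' = lnb q + (1/2:ℚ)^(n-1) := by
        rw [hq'def, rnb_val (by rw [hn]; omega), lnb_val (by rw [hn]; omega), hn]
        have h2 : (1/2:ℚ)^n + (1/2:ℚ)^n = (1/2:ℚ)^(n-1) := by
          obtain ⟨d, hd⟩ : ∃ d, n = d + 1 := ⟨n-1, by omega⟩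
          rw [hd, Nat.add_sub_cancel, pow_succ]
          ring
        linarith [h2]
      have hq'lev : level q' = n - 1 := by
        rw [hq'v]
        apply level_add_pow hlnbZ.2.2
        rw [he]; omega
      have hq'1 : 1 ≤ level q' := by omega
      have hq'Z : InZ q' := inZ_rnb hq
      have hlnbq' : lnb q' = lnb q := by
        rw [lnb_val hq'1, hq'lev, hq'v]
        ring
      have ih := IH q' (by omega) hq'Z (by rw [hlnbq', he]; exact h1)
      rw [hlnbq', he, hq'lev] at ih
      -- ih : a^e ≤ K * ρ (rnb q') (rnb (lnb q)) + a^(n-1-1)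
      set R := rnb (lnb q) with hRdef
      have hRv : R = lnb q + (1/2:ℚ)^e := by
        rw [hRdef, rnb_val (by rw [he]; omega), he]
      have hq'R : q' < R := by
        rw [hq'v, hRv]
        have := half_lt_half (show e < n - 1 by omega)
        linarith
      have hRZ : InZ R := inZ_rnb hlnbZ
      have hRlev : level R ≤ e - 1 := level_rnb_le hlnbZ.2.2 he h1
      have e5 : ρ q' R = a ^ level q' + ρ (rnb q') R := by
        apply r5' h hq'Z hRZ hq'R hq'1
        apply rnb_le hRZ.2.2 hq'Z.2.2 hq'R (by omega) hq'1
      rw [e5, hq'lev]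
      have hkey := key_pow ha0 (show 1 ≤ n - 1 by omega)
      have hKpos := K_pos ha0 ha
      have hnn := vnn h (rnb q') R (inZ_rnb hq'Z) hRZ
      have hexp : n - 1 - 1 = n - 2 := by omega
      nlinarith [ih]

lemma re (h : IsVPath a ρ) (ha0 : 0 < a) (ha : a < 1/2) {q : ℚ} (hq : InZ q)
    (h1 : 1 ≤ level (lnb q)) :
    a ^ level (lnb q) ≤ (1-a)/a * ρ (rnb q) (rnb (lnb q)) + a ^ (level q - 1) :=
  re_aux h ha0 ha (level q) q le_rfl hq h1

lemma le_mirror (h : IsVPath a ρ) (ha0 : 0 < a) (ha : a < 1/2) {p : ℚ} (hp : InZ p)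
    (h1 : 1 ≤ level (rnb p)) :
    a ^ level (rnb p) ≤ (1-a)/a * ρ (lnb p) (lnb (rnb p)) + a ^ (level p - 1) := by
  have h' := reflect_vpath h
  have key := re h' ha0 ha (q := 1 - p) (inZ_reflect hp)
    (by rw [lnb_reflect, level_reflect]; exact h1)
  rw [lnb_reflect, rnb_reflect, rnb_reflect, level_reflect, level_reflect] at key
  simp only [sub_sub_cancel] at key
  exact key

end Rho3


section Rho4

variable {a : ℝ} {ρ : ℚ → ℚ → ℝ}

lemma half_le_half {e n : ℕ} (h : e ≤ n) : (1/2:ℚ)^n ≤ (1/2)^e :=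
  pow_le_pow_of_le_one (by norm_num) (by norm_num) h

lemma between_rnb {x v : ℚ} (hx : IsDyadic x) (hv : IsDyadic v) (h1 : 1 ≤ level x)
    (h2 : x < v) (h3 : v < rnb x) : level x < level v := by
  by_contra hc
  push_neg at hc
  have := rnb_le hv hx h2 hc h1
  linarith

lemma between_lnb {y v : ℚ} (hy : IsDyadic y) (hv : IsDyadic v) (h1 : 1 ≤ level y)
    (h2 : lnb y < v) (h3 : v < y) : level y < level v := by
  by_contra hc
  push_neg at hc
  have := le_lnb hv hy h3 hc h1
  linarith

lemma edge_aux (h : IsVPath a ρ) (ha0 : 0 < a) (ha : a < 1/2) (N : ℕ) :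
    ∀ p : ℚ, level p ≤ N → ∀ x : ℚ, InZ x → InZ p → 1 ≤ level x →
    x < p → p < rnb x →
    a ^ level x ≤ (1-a)/a * ρ x p + a ^ level p + (1-a)/a * ρ (rnb p) (rnb x) := by
  induction N with
  | zero =>
    intro p hN x hx hp hx1 hxp hpr
    exfalso
    have := between_rnb hx.2.2 hp.2.2 hx1 hxp hpr
    omega
  | succ N IH =>
    intro p hN x hx hp hx1 hxp hpr
    have hlev : level x < level p := between_rnb hx.2.2 hp.2.2 hx1 hxp hpr
    have hp1 : 1 ≤ level p := by omega
    have hKpos := K_pos ha0 ha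
    have hlnb_ge : x ≤ lnb p := le_lnb hx.2.2 hp.2.2 hxp (by omega) hp1
    have hrxZ := inZ_rnb hx
    have hrpZ := inZ_rnb hp
    have hrnbp_le : rnb p ≤ rnb x := by
      apply rnb_le hrxZ.2.2 hp.2.2 hpr ?_ hp1
      have := level_rnb_le hx.2.2 rfl hx1
      omega
    have hkey := key_pow ha0 hp1
    rcases eq_or_lt_of_le hlnb_ge with hc | hc
    · -- x = lnb p
      have hre := re h ha0 ha hp (by rw [← hc]; exact hx1)
      rw [← hc] at hre
      have hlow : a ^ level p ≤ ρ x p := by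
        have hb := rho_lower h ha0 hx hp hxp
        rwa [max_eq_right (le_of_lt hlev)] at hb
      have hmul : (1-a)/a * a^(level p) ≤ (1-a)/a * ρ x p :=
        mul_le_mul_of_nonneg_left hlow (le_of_lt hKpos)
      linarith
    · -- x < lnb p
      have hlnbZ := inZ_lnb hp
      have hlplt : lnb p < rnb x := lt_trans (lnb_lt hp1) hpr
      have hl1 : level x < level (lnb p) := between_rnb hx.2.2 hlnbZ.2.2 hx1 hc hlplt
      have hl1' : 1 ≤ level (lnb p) := by omega
      have hlnble := level_lnb_le hp.2.2 rfl hp1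
      have ih := IH (lnb p) (by omega) x hx hlnbZ hx1 hc hlplt
      have hre := re h ha0 ha hp hl1'
      have hrlZ := inZ_rnb hlnbZ
      have ho1 : rnb p ≤ rnb (lnb p) := by
        obtain ⟨lp, hlp⟩ : ∃ m, level p = m := ⟨_, rfl⟩
        obtain ⟨llp, hllp⟩ : ∃ m, level (lnb p) = m := ⟨_, rfl⟩
        have t1 : rnb (lnb p) = lnb p + (1/2:ℚ)^llp := by
          rw [rnb_val (by rw [hllp]; omega), hllp]
        have t2 : lnb p = p - (1/2:ℚ)^lp := by
          rw [lnb_val (by rw [hlp]; omega), hlp]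
        have t3 : rnb p = p + (1/2:ℚ)^lp := by
          rw [rnb_val (by rw [hlp]; omega), hlp]
        rw [t1, t2, t3]
        have i1 : (1/2:ℚ)^lp + (1/2)^lp = (1/2)^(lp - 1) := by
          obtain ⟨d, hd⟩ : ∃ d, lp = d + 1 := ⟨lp - 1, by omega⟩
          rw [hd, Nat.add_sub_cancel, pow_succ]
          ring
        have i2 : (1/2:ℚ)^(lp - 1) ≤ (1/2)^llp := half_le_half (by omega)
        linarith
      have ho2 : rnb (lnb p) ≤ rnb x := by
        apply rnb_le hrxZ.2.2 hlnbZ.2.2 hlplt ?_ hl1'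
        have := level_rnb_le hx.2.2 rfl hx1
        omega
      have hpass : ρ (rnb p) (rnb x) = ρ (rnb p) (rnb (lnb p)) + ρ (rnb (lnb p)) (rnb x) := by
        apply passage_l h hrpZ hrlZ hrxZ ho1 ho2
        intro v hv hv1 hv2
        have hvgt : lnb p < v := lt_of_lt_of_le (lt_trans (lnb_lt hp1) (lt_rnb hp1)) hv1
        have hb := between_rnb hlnbZ.2.2 hv.2.2 hl1' hvgt hv2
        have := level_rnb_le hlnbZ.2.2 rfl hl1'
        omega
      have hr6 : ρ x p = ρ x (lnb p) + a^(level p) := r6' h hx hp hxp hp1 hlnb_ge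
      rw [hr6, hpass]
      have expand : (1-a)/a * (ρ x (lnb p) + a^(level p)) + a^(level p)
          + (1-a)/a * (ρ (rnb p) (rnb (lnb p)) + ρ (rnb (lnb p)) (rnb x))
          = ((1-a)/a * ρ x (lnb p)) + ((1-a)/a * a^(level p) + a^(level p))
          + (1-a)/a * ρ (rnb p) (rnb (lnb p)) + (1-a)/a * ρ (rnb (lnb p)) (rnb x) := by
        ring
      rw [expand, hkey]
      linarith

lemma edge (h : IsVPath a ρ) (ha0 : 0 < a) (ha : a < 1/2) {x p : ℚ}
    (hx : InZ x) (hp : InZ p) (hx1 : 1 ≤ level x) (hxp : x < p) (hpr : p < rnb x) :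
    a ^ level x ≤ (1-a)/a * ρ x p + a ^ level p + (1-a)/a * ρ (rnb p) (rnb x) :=
  edge_aux h ha0 ha (level p) p le_rfl x hx hp hx1 hxp hpr

lemma edge' (h : IsVPath a ρ) (ha0 : 0 < a) (ha : a < 1/2) {q y : ℚ}
    (hq : InZ q) (hy : InZ y) (hy1 : 1 ≤ level y) (hqy : q < y) (hlq : lnb y < q) :
    a ^ level y ≤ (1-a)/a * ρ q y + a ^ level q + (1-a)/a * ρ (lnb y) (lnb q) := by
  have h' := reflect_vpath h
  have key := edge h' ha0 ha (x := 1 - y) (p := 1 - q)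
    (inZ_reflect hy) (inZ_reflect hq)
    (by rw [level_reflect]; exact hy1) (by linarith)
    (by rw [rnb_reflect]; linarith)
  rw [level_reflect, level_reflect, rnb_reflect, rnb_reflect] at key
  simp only [sub_sub_cancel] at key
  rw [vsym h y q, vsym h (lnb q) (lnb y)] at key
  exact key

end Rho4


section Rho5

variable {a : ℝ} {ρ : ℚ → ℚ → ℝ}

lemma lemM_aux (h : IsVPath a ρ) (ha0 : 0 < a) (ha : a < 1/2) (N : ℕ) :
    ∀ x y z : ℚ, level x + level y + level z ≤ N →
    InZ x → InZ y → InZ z → x ≤ y → y ≤ z → ρ y z ≤ (1-a)/a * ρ x z := by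
  induction N with
  | zero =>
    intro x y z hN hx hy hz hxy hyz
    have hK1 := K_one ha0 ha
    rcases eq_or_lt_of_le hxy with he | hxy'
    · subst he
      nlinarith [vnn h x z hx hz]
    · rcases eq_or_lt_of_le hyz with he | hyz'
      · rw [he, vdiag h]
        exact mul_nonneg (by positivity) (vnn h x z hx hz)
      · exfalso
        have h0 : level y = 0 := by omega
        rcases level_zero_cases hy h0 with h' | h'
        · rw [h'] at hxy'; linarith [hx.1]
        · rw [h'] at hyz'; linarith [hz.2.1]
  | succ N IH =>
    intro x y z hN hx hy hz hxy hyz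
    have hK1 := K_one ha0 ha
    have hKpos := K_pos ha0 ha
    rcases eq_or_lt_of_le hxy with he | hxy'
    · subst he
      nlinarith [vnn h x z hx hz]
    · rcases eq_or_lt_of_le hyz with he | hyz'
      · rw [he, vdiag h]
        exact mul_nonneg (by positivity) (vnn h x z hx hz)
      · have hxz : x < z := lt_trans hxy' hyz'
        by_cases hca : 1 ≤ level x ∧ level z ≤ level x
        · have hrle : rnb x ≤ z := rnb_le hz.2.2 hx.2.2 hxz hca.2 hca.1
          have hrlev := level_rnb_le hx.2.2 rfl hca.1
          have hrxZ := inZ_rnb hx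
          have e1 : ρ x z = a^(level x) + ρ (rnb x) z := r5' h hx hz hxz hca.1 hrle
          rcases le_or_gt (rnb x) y with hc | hc
          · have ih := IH (rnb x) y z (by omega) hrxZ hy hz hc hyz
            have hmono : (1-a)/a * ρ (rnb x) z ≤ (1-a)/a * (a^(level x) + ρ (rnb x) z) := by
              apply mul_le_mul_of_nonneg_left ?_ (le_of_lt hKpos)
              have := pow_pos ha0 (level x)
              linarith
            rw [e1]
            linarith
          · have hpass : ρ y z = ρ y (rnb x) + ρ (rnb x) z := by
              apply passage_l h hy hrxZ hz (le_of_lt hc) hrle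
              intro v hv hv1 hv2
              have := between_rnb hx.2.2 hv.2.2 hca.1 (lt_of_lt_of_le hxy' hv1) hv2
              omega
            have hub : ρ y (rnb x) ≤ ∑ i ∈ Finset.Ico (level x + 1) (level y + 1), a^i := by
              apply ubl h ha0 hy hrxZ (le_of_lt hc) (e := level x) (by omega)
              intro v hv hv1 hv2
              exact between_rnb hx.2.2 hv.2.2 hca.1 (lt_of_lt_of_le hxy' hv1) hv2
            have hgeo := geo_le ha0 ha (level x) (level y)
            have hnn2 := vnn h (rnb x) z hrxZ hz
            rw [e1]
            nlinarith
        · by_cases hcb : level x < level z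
          · have hz1 : 1 ≤ level z := by omega
            have hxlnb : x ≤ lnb z := le_lnb hx.2.2 hz.2.2 hxz (by omega) hz1
            have hlnbZ := inZ_lnb hz
            have hlnblev := level_lnb_le hz.2.2 rfl hz1
            have e1 : ρ x z = ρ x (lnb z) + a^(level z) := r6' h hx hz hxz hz1 hxlnb
            rcases le_or_gt y (lnb z) with hc | hc
            · have e2 : ρ y z = ρ y (lnb z) + a^(level z) := r6' h hy hz hyz' hz1 hc
              have ih := IH x y (lnb z) (by omega) hx hy hlnbZ (le_of_lt hxy') hc
              have hpow : a^(level z) ≤ (1-a)/a * a^(level z) := by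
                nlinarith [pow_pos ha0 (level z)]
              rw [e1, e2]
              have hexp : (1-a)/a * (ρ x (lnb z) + a^(level z))
                  = (1-a)/a * ρ x (lnb z) + (1-a)/a * a^(level z) := by ring
              rw [hexp]
              linarith
            · have hub : ρ y z ≤ ∑ i ∈ Finset.Ico (level z + 1) (level y + 1), a^i := by
                apply ubl h ha0 hy hz (le_of_lt hyz') (e := level z) le_rfl
                intro v hv hv1 hv2
                exact between_lnb hz.2.2 hv.2.2 hz1 (lt_of_lt_of_le hc hv1) hv2
              have hgeo := geo_le ha0 ha (level z) (level y)
              have hnn2 := vnn h x (lnb z) hx hlnbZ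
              rw [e1]
              nlinarith
          · have hx0 : level x = 0 := by omega
            have hz0 : level z = 0 := by omega
            have hex : x = 0 := by
              rcases level_zero_cases hx hx0 with h' | h'
              · exact h'
              · exfalso; rw [h'] at hxz; linarith [hz.2.1]
            have hez : z = 1 := by
              rcases level_zero_cases hz hz0 with h' | h'
              · exfalso; rw [h'] at hxz; linarith [hx.1]
              · exact h'
            subst hex; subst hez
            have hub : ρ y 1 ≤ ∑ i ∈ Finset.Ico (0 + 1) (level y + 1), a^i := by
              apply ubl h ha0 hy hz (le_of_lt hyz') (e := 0) (by rw [level_one])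
              intro v hv hv1 hv2
              have hvne0 : v ≠ 0 := by
                intro he; rw [he] at hv1; linarith
              have hvne1 : v ≠ 1 := by
                intro he; rw [he] at hv2; linarith
              have := level_pos_ne hv hvne0 hvne1
              omega
            have hgeo := geo_le ha0 ha 0 (level y)
            rw [v01 h]
            simp only [pow_zero, mul_one] at hgeo ⊢
            linarith

lemma lemM (h : IsVPath a ρ) (ha0 : 0 < a) (ha : a < 1/2) {x y z : ℚ}
    (hx : InZ x) (hy : InZ y) (hz : InZ z) (hxy : x ≤ y) (hyz : y ≤ z) :
    ρ y z ≤ (1-a)/a * ρ x z :=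
  lemM_aux h ha0 ha (level x + level y + level z) x y z le_rfl hx hy hz hxy hyz

lemma lemM' (h : IsVPath a ρ) (ha0 : 0 < a) (ha : a < 1/2) {x y z : ℚ}
    (hx : InZ x) (hy : InZ y) (hz : InZ z) (hxy : x ≤ y) (hyz : y ≤ z) :
    ρ x y ≤ (1-a)/a * ρ x z := by
  have h' := reflect_vpath h
  have key := lemM h' ha0 ha (x := 1-z) (y := 1-y) (z := 1-x)
    (inZ_reflect hz) (inZ_reflect hy) (inZ_reflect hx) (by linarith) (by linarith)
  simp only [sub_sub_cancel] at key
  rw [vsym h x y, vsym h x z]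
  exact key

end Rho5


section Rho6

variable {a : ℝ} {ρ : ℚ → ℚ → ℝ}

lemma pos_of_level {q : ℚ} (hq : InZ q) (h1 : 1 ≤ level q) : 0 < q := by
  rcases eq_or_lt_of_le hq.1 with he | he
  · exfalso; rw [← he, level_zero] at h1; omega
  · exact he

lemma lt_one_of_level {q : ℚ} (hq : InZ q) (h1 : 1 ≤ level q) : q < 1 := by
  rcases eq_or_lt_of_le hq.2.1 with he | he
  · exfalso; rw [he, level_one] at h1; omega
  · exact he

lemma se0_aux (h : IsVPath a ρ) (ha0 : 0 < a) (ha : a < 1/2) (N : ℕ) :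
    ∀ p : ℚ, level p ≤ N → InZ p → 1 ≤ level p →
    1 ≤ (1-a)/a * ρ 0 p + a ^ level p + (1-a)/a * ρ (rnb p) 1 := by
  induction N with
  | zero => intro p hN hp h1; omega
  | succ N IH =>
    intro p hN hp h1
    obtain ⟨n, hn⟩ : ∃ n, level p = n := ⟨_, rfl⟩
    rw [hn] at hN h1 ⊢
    have hppos : 0 < p := pos_of_level hp (by rw [hn]; omega)
    have hplt1 : p < 1 := lt_one_of_level hp (by rw [hn]; omega)
    rcases eq_or_lt_of_le h1 with hbase | hstep
    · -- n = 1, p = 1/2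
      obtain ⟨k, hk, hq⟩ := level_rep hp.2.2 hn (by omega)
      rw [← hbase] at hq
      have hk1 : k = 1 := by
        have h0 : (0:ℚ) < (k:ℚ)/2^1 := by rw [← hq]; exact hppos
        have h1' : (k:ℚ)/2^1 < 1 := by rw [← hq]; exact hplt1
        have hk0 : (0:ℤ) < k := by
          by_contra hc
          push_neg at hc
          have : (k:ℚ) ≤ 0 := by exact_mod_cast hc
          have : (k:ℚ)/2^1 ≤ 0 := by
            apply div_nonpos_of_nonpos_of_nonneg this (by norm_num)
          linarith
        have hk2 : k < 2 := by
          by_contra hc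
          push_neg at hc
          have : (2:ℚ) ≤ (k:ℚ) := by exact_mod_cast hc
          have : (1:ℚ) ≤ (k:ℚ)/2^1 := by rw [le_div_iff₀ (by norm_num)]; linarith
          linarith
        omega
      rw [hk1] at hq
      norm_num at hq
      have hlnb : lnb p = 0 := by
        rw [lnb_val (by rw [hn]; omega), hn, ← hbase, hq]
        norm_num
      have hrnb : rnb p = 1 := by
        rw [rnb_val (by rw [hn]; omega), hn, ← hbase, hq]
        norm_num
      have e1 : ρ 0 p = ρ 0 (lnb p) + a ^ level p :=
        vr6 h 0 p inZ_zero hp hppos (by rw [level_zero, hn]; omega)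
      rw [e1, hlnb, hrnb, vdiag h, vdiag h, hn, ← hbase]
      have hfs : (1-a)/a * a = 1 - a := by field_simp
      simp only [zero_add, mul_zero, add_zero, pow_one]
      linarith
    · -- n ≥ 2
      rcases nb_level hp.2.2 (by rw [hn]; omega) with hleft | hright
      · -- level (lnb p) = n - 1 : use p' = lnb p
        rw [hn] at hleft
        have hp'Z := inZ_lnb hp
        have hrnbeq : rnb (lnb p) = rnb p := by
          have t1 : rnb (lnb p) = lnb p + (1/2:ℚ)^(n-1) := by
            rw [rnb_val (by rw [hleft]; omega), hleft]
          have t2 : lnb p = p - (1/2:ℚ)^n := by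
            rw [lnb_val (by rw [hn]; omega), hn]
          have t3 : rnb p = p + (1/2:ℚ)^n := by
            rw [rnb_val (by rw [hn]; omega), hn]
          have i1 : (1/2:ℚ)^n + (1/2)^n = (1/2)^(n - 1) := by
            obtain ⟨d, hd⟩ : ∃ d, n = d + 1 := ⟨n-1, by omega⟩
            rw [hd, Nat.add_sub_cancel, pow_succ]
            ring
          rw [t1, t2, t3]
          linarith
        have ih := IH (lnb p) (by omega) hp'Z (by rw [hleft]; omega)
        rw [hleft, hrnbeq] at ih
        have e2 : ρ 0 p = ρ 0 (lnb p) + a ^ level p :=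
          vr6 h 0 p inZ_zero hp hppos (by rw [level_zero, hn]; omega)
        rw [e2, hn]
        have hkey := key_pow ha0 (show 1 ≤ n by omega)
        have hKpos := K_pos ha0 ha
        have hexp : (1-a)/a * (ρ 0 (lnb p) + a^n)
            = (1-a)/a * ρ 0 (lnb p) + (1-a)/a * a^n := by ring
        rw [hexp]
        linarith
      · -- level (rnb p) = n - 1 : use p' = rnb p
        rw [hn] at hright
        have hp'Z := inZ_rnb hp
        have hp'pos : 0 < rnb p := lt_trans hppos (lt_rnb (by rw [hn]; omega))
        have hp'lt1 : rnb p < 1 := lt_one_of_level hp'Z (by rw [hright]; omega)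
        have hlnbeq : lnb (rnb p) = lnb p := by
          have t1 : lnb (rnb p) = rnb p - (1/2:ℚ)^(n-1) := by
            rw [lnb_val (by rw [hright]; omega), hright]
          have t2 : lnb p = p - (1/2:ℚ)^n := by
            rw [lnb_val (by rw [hn]; omega), hn]
          have t3 : rnb p = p + (1/2:ℚ)^n := by
            rw [rnb_val (by rw [hn]; omega), hn]
          have i1 : (1/2:ℚ)^n + (1/2)^n = (1/2)^(n - 1) := by
            obtain ⟨d, hd⟩ : ∃ d, n = d + 1 := ⟨n-1, by omega⟩
            rw [hd, Nat.add_sub_cancel, pow_succ]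
            ring
          rw [t1, t2, t3]
          linarith
        have ih := IH (rnb p) (by omega) hp'Z (by rw [hright]; omega)
        rw [hright] at ih
        have e1 : ρ 0 (rnb p) = ρ 0 (lnb (rnb p)) + a ^ level (rnb p) :=
          vr6 h 0 (rnb p) inZ_zero hp'Z hp'pos (by rw [level_zero, hright]; omega)
        rw [hright, hlnbeq] at e1
        have e2 : ρ 0 p = ρ 0 (lnb p) + a ^ level p :=
          vr6 h 0 p inZ_zero hp hppos (by rw [level_zero, hn]; omega)
        have e3 : ρ (rnb p) 1 = a ^ level (rnb p) + ρ (rnb (rnb p)) 1 := by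
          apply r5' h hp'Z inZ_one hp'lt1 (by rw [hright]; omega)
          exact (inZ_rnb hp'Z).2.1
        rw [hright] at e3
        rw [e2, e3, hn]
        have hkey := key_pow ha0 (show 1 ≤ n by omega)
        have hKpos := K_pos ha0 ha
        rw [e1] at ih
        have hexp1 : (1-a)/a * (ρ 0 (lnb p) + a^n) = (1-a)/a * ρ 0 (lnb p) + (1-a)/a * a^n := by ring
        have hexp2 : (1-a)/a * (a^(n-1) + ρ (rnb (rnb p)) 1)
            = (1-a)/a * a^(n-1) + (1-a)/a * ρ (rnb (rnb p)) 1 := by ring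
        have hexp3 : (1-a)/a * (ρ 0 (lnb p) + a^(n-1))
            = (1-a)/a * ρ 0 (lnb p) + (1-a)/a * a^(n-1) := by ring
        rw [hexp1, hexp2]
        rw [hexp3] at ih
        linarith

lemma se0 (h : IsVPath a ρ) (ha0 : 0 < a) (ha : a < 1/2) {p : ℚ} (hp : InZ p)
    (h1 : 1 ≤ level p) :
    1 ≤ (1-a)/a * ρ 0 p + a ^ level p + (1-a)/a * ρ (rnb p) 1 :=
  se0_aux h ha0 ha (level p) p le_rfl hp h1

end Rho6


section Rho7

variable {a : ℝ} {ρ : ℚ → ℚ → ℝ}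

lemma se_aux (h : IsVPath a ρ) (ha0 : 0 < a) (ha : a < 1/2) (N : ℕ) :
    ∀ x p y : ℚ, level x + level y ≤ N → InZ x → InZ p → InZ y →
    x ≤ p → 1 ≤ level p → rnb p ≤ y →
    ρ x y ≤ (1-a)/a * ρ x p + a ^ level p + (1-a)/a * ρ (rnb p) y := by
  induction N with
  | zero =>
    intro x p y hN hx hp hy hxp hp1 hr
    -- level x = level y = 0 forces x = 0, y = 1
    have hpy : p < y := lt_of_lt_of_le (lt_rnb hp1) hr
    have hx0 : level x = 0 := by omega
    have hy0 : level y = 0 := by omega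
    have hex : x = 0 := by
      rcases level_zero_cases hx hx0 with h' | h'
      · exact h'
      · exfalso
        have : p < 1 := lt_of_lt_of_le hpy hy.2.1
        rw [h'] at hxp; linarith
    have hey : y = 1 := by
      rcases level_zero_cases hy hy0 with h' | h'
      · exfalso
        rw [h'] at hpy
        linarith [pos_of_level hp hp1]
      · exact h'
    subst hex; subst hey
    rw [v01 h]
    exact se0 h ha0 ha hp hp1
  | succ N IH =>
    intro x p y hN hx hp hy hxp hp1 hr
    have hK1 := K_one ha0 ha
    have hKpos := K_pos ha0 ha
    have hrpZ := inZ_rnb hp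
    have hpy : p < y := lt_of_lt_of_le (lt_rnb hp1) hr
    rcases eq_or_lt_of_le hxp with he | hxp'
    · -- x = p
      subst he
      have e := r5' h hx hy hpy hp1 hr
      rw [e, vdiag h]
      have hnn := vnn h (rnb x) y (inZ_rnb hx) hy
      nlinarith [pow_pos ha0 (level x)]
    · have hxy : x < y := lt_trans hxp' hpy
      by_cases hca : 1 ≤ level x ∧ level y ≤ level x
      · -- CASE 1
        have hrxZ := inZ_rnb hx
        have hrxlev := level_rnb_le hx.2.2 rfl hca.1
        rcases le_or_gt (rnb x) p with hc | hc
        · -- 1a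
          have hrxy : rnb x ≤ y := le_trans hc (le_of_lt hpy)
          have e1 : ρ x y = a^(level x) + ρ (rnb x) y := r5' h hx hy hxy hca.1 hrxy
          have e2 : ρ x p = a^(level x) + ρ (rnb x) p := r5' h hx hp hxp' hca.1 hc
          have ih := IH (rnb x) p y (by omega) hrxZ hp hy hc hp1 hr
          rw [e1, e2]
          have hexp : (1-a)/a * (a^(level x) + ρ (rnb x) p)
              = (1-a)/a * a^(level x) + (1-a)/a * ρ (rnb x) p := by ring
          rw [hexp]
          nlinarith [pow_pos ha0 (level x)]
        · -- 1b : p inside (x, rnb x)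
          have hrxy : rnb x ≤ y := rnb_le hy.2.2 hx.2.2 hxy hca.2 hca.1
          have hlevxp : level x < level p := between_rnb hx.2.2 hp.2.2 hca.1 hxp' hc
          have hedge := edge h ha0 ha hx hp hca.1 hxp' hc
          have hPle : rnb p ≤ rnb x := rnb_le hrxZ.2.2 hp.2.2 hc (by omega) hp1
          have hpass : ρ (rnb p) y = ρ (rnb p) (rnb x) + ρ (rnb x) y := by
            apply passage_l h hrpZ hrxZ hy hPle hrxy
            intro v hv hv1 hv2
            have hvgt : x < v := lt_trans hxp' (lt_of_lt_of_le (lt_rnb hp1) hv1)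
            have := between_rnb hx.2.2 hv.2.2 hca.1 hvgt hv2
            omega
          have e1 : ρ x y = a^(level x) + ρ (rnb x) y := r5' h hx hy hxy hca.1 hrxy
          rw [e1, hpass]
          have hnn := vnn h (rnb x) y hrxZ hy
          have hexp : (1-a)/a * (ρ (rnb p) (rnb x) + ρ (rnb x) y)
              = (1-a)/a * ρ (rnb p) (rnb x) + (1-a)/a * ρ (rnb x) y := by ring
          rw [hexp]
          nlinarith
      · by_cases hcb : 1 ≤ level y
        · -- CASE 2
          have hxley : level x ≤ level y := by omega
          have hlnbyZ := inZ_lnb hy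
          have hlnbylev := level_lnb_le hy.2.2 rfl hcb
          rcases le_or_gt (rnb p) (lnb y) with hc | hc
          · -- 2a
            have hxlnby : x ≤ lnb y :=
              le_trans (le_of_lt hxp') (le_trans (le_of_lt (lt_rnb hp1)) hc)
            have e1 : ρ x y = ρ x (lnb y) + a^(level y) := r6' h hx hy hxy hcb hxlnby
            have e2 : ρ (rnb p) y = ρ (rnb p) (lnb y) + a^(level y) := by
              apply r6' h hrpZ hy (lt_of_le_of_lt hc (lnb_lt hcb)) hcb hc
            have ih := IH x p (lnb y) (by omega) hx hp hlnbyZ (le_of_lt hxp') hp1 hc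
            rw [e1, e2]
            have hexp : (1-a)/a * (ρ (rnb p) (lnb y) + a^(level y))
                = (1-a)/a * ρ (rnb p) (lnb y) + (1-a)/a * a^(level y) := by ring
            rw [hexp]
            nlinarith [pow_pos ha0 (level y)]
          · -- 2b
            rcases eq_or_lt_of_le hr with hey | hey
            · -- 2b-i : y = rnb p
              subst hey
              have hlPlev := level_rnb_le hp.2.2 rfl hp1
              have hxlnbP : x ≤ lnb (rnb p) := le_lnb hx.2.2 hrpZ.2.2 hxy hxley hcb
              have hlnbPZ := inZ_lnb hrpZ
              have hlnbPlev := level_lnb_le hrpZ.2.2 rfl hcb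
              have d1 : ρ x (rnb p) = ρ x (lnb (rnb p)) + a^(level (rnb p)) :=
                r6' h hx hrpZ hxy hcb hxlnbP
              have d2 : ρ x p = ρ x (lnb p) + a^(level p) :=
                vr6 h x p hx hp hxp' (by omega)
              have hlnbPp : lnb (rnb p) < p := by
                have t1 : lnb (rnb p) = rnb p - (1/2:ℚ)^(level (rnb p)) := lnb_val hcb
                have t2 : rnb p = p + (1/2:ℚ)^(level p) := rnb_val hp1
                have := half_lt_half (show level (rnb p) < level p by omega)
                linarith
              have hlnbPlnbp : lnb (rnb p) ≤ lnb p :=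
                le_lnb hlnbPZ.2.2 hp.2.2 hlnbPp (by omega) hp1
              have d3 : ρ x (lnb p) = ρ x (lnb (rnb p)) + ρ (lnb (rnb p)) (lnb p) := by
                apply passage_r h hx hlnbPZ (inZ_lnb hp) hxlnbP hlnbPlnbp
                intro v hv hv1 hv2
                have hvP : v < rnb p :=
                  lt_of_le_of_lt hv2 (lt_trans (lnb_lt hp1) (lt_rnb hp1))
                have := between_lnb hrpZ.2.2 hv.2.2 hcb hv1 hvP
                omega
              have dle := le_mirror h ha0 ha hp hcb
              have hkey := key_pow ha0 hp1
              rw [vdiag h, d1, d2, d3]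
              have hnn := vnn h x (lnb (rnb p)) hx hlnbPZ
              have hsy : ρ (lnb p) (lnb (rnb p)) = ρ (lnb (rnb p)) (lnb p) := vsym h _ _
              rw [hsy] at dle
              have hexp : (1-a)/a * (ρ x (lnb (rnb p)) + ρ (lnb (rnb p)) (lnb p) + a^(level p))
                  = (1-a)/a * ρ x (lnb (rnb p)) + (1-a)/a * ρ (lnb (rnb p)) (lnb p)
                    + (1-a)/a * a^(level p) := by ring
              rw [hexp]
              have hmono : ρ x (lnb (rnb p)) ≤ (1-a)/a * ρ x (lnb (rnb p)) := by
                nlinarith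
              linarith
            · -- 2b-ii : rnb p < y
              have hPlev : level y < level (rnb p) :=
                between_lnb hy.2.2 hrpZ.2.2 hcb hc hey
              have hP1 : 1 ≤ level (rnb p) := by omega
              have hlPlev := level_rnb_le hp.2.2 rfl hp1
              have hedge' := edge' h ha0 ha hrpZ hy hcb hey hc
              have dle := le_mirror h ha0 ha hp hP1
              have hxlnby : x ≤ lnb y := le_lnb hx.2.2 hy.2.2 hxy hxley hcb
              have e1 : ρ x y = ρ x (lnb y) + a^(level y) := r6' h hx hy hxy hcb hxlnby
              have d2 : ρ x p = ρ x (lnb p) + a^(level p) :=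
                vr6 h x p hx hp hxp' (by omega)
              have hlnbrpZ := inZ_lnb hrpZ
              have hlnbrplev := level_lnb_le hrpZ.2.2 rfl hP1
              have hlnbrpp : lnb (rnb p) < p := by
                have t1 : lnb (rnb p) = rnb p - (1/2:ℚ)^(level (rnb p)) := lnb_val hP1
                have t2 : rnb p = p + (1/2:ℚ)^(level p) := rnb_val hp1
                have := half_lt_half (show level (rnb p) < level p by omega)
                linarith
              have hlnbylnbrp : lnb y ≤ lnb (rnb p) :=
                le_lnb hlnbyZ.2.2 hrpZ.2.2 hc (by omega) hP1
              have hlnbrplnbp : lnb (rnb p) ≤ lnb p :=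
                le_lnb hlnbrpZ.2.2 hp.2.2 hlnbrpp (by omega) hp1
              have d4 : ρ (lnb y) (lnb p)
                  = ρ (lnb y) (lnb (rnb p)) + ρ (lnb (rnb p)) (lnb p) := by
                apply passage_r h hlnbyZ hlnbrpZ (inZ_lnb hp) hlnbylnbrp hlnbrplnbp
                intro v hv hv1 hv2
                have hvP : v < rnb p :=
                  lt_of_le_of_lt hv2 (lt_trans (lnb_lt hp1) (lt_rnb hp1))
                have := between_lnb hrpZ.2.2 hv.2.2 hP1 hv1 hvP
                omega
              have d3 : ρ x (lnb p) = ρ x (lnb y) + ρ (lnb y) (lnb p) := by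
                apply passage_r h hx hlnbyZ (inZ_lnb hp) hxlnby
                  (le_trans hlnbylnbrp hlnbrplnbp)
                intro v hv hv1 hv2
                have hvy : v < y := by
                  have : v ≤ lnb p := hv2
                  have hple : p < y := hpy
                  linarith [lnb_lt hp1]
                have := between_lnb hy.2.2 hv.2.2 hcb hv1 hvy
                omega
              rw [e1, d2, d3, d4]
              have hkey := key_pow ha0 hp1
              have hnn := vnn h x (lnb y) hx hlnbyZ
              have hsy : ρ (lnb p) (lnb (rnb p)) = ρ (lnb (rnb p)) (lnb p) := vsym h _ _
              rw [hsy] at dle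
              have hmono : ρ x (lnb y) ≤ (1-a)/a * ρ x (lnb y) := by nlinarith
              have hexp : (1-a)/a * (ρ x (lnb y) + (ρ (lnb y) (lnb (rnb p))
                    + ρ (lnb (rnb p)) (lnb p)) + a^(level p))
                  = (1-a)/a * ρ x (lnb y) + (1-a)/a * ρ (lnb y) (lnb (rnb p))
                    + (1-a)/a * ρ (lnb (rnb p)) (lnb p) + (1-a)/a * a^(level p) := by ring
              rw [hexp]
              linarith
        · -- CASE 3 : level x = level y = 0
          have hx0 : level x = 0 := by omega
          have hy0 : level y = 0 := by omega
          have hex : x = 0 := by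
            rcases level_zero_cases hx hx0 with h' | h'
            · exact h'
            · exfalso; rw [h'] at hxy; linarith [hy.2.1]
          have hey : y = 1 := by
            rcases level_zero_cases hy hy0 with h' | h'
            · exfalso; rw [h'] at hpy; linarith [pos_of_level hp hp1]
            · exact h'
          subst hex; subst hey
          rw [v01 h]
          exact se0 h ha0 ha hp hp1

lemma se (h : IsVPath a ρ) (ha0 : 0 < a) (ha : a < 1/2) {x p y : ℚ}
    (hx : InZ x) (hp : InZ p) (hy : InZ y) (hxp : x ≤ p) (hp1 : 1 ≤ level p)
    (hr : rnb p ≤ y) :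
    ρ x y ≤ (1-a)/a * ρ x p + a ^ level p + (1-a)/a * ρ (rnb p) y :=
  se_aux h ha0 ha (level x + level y) x p y le_rfl hx hp hy hxp hp1 hr

end Rho7


section Rho8

variable {a : ℝ} {ρ : ℚ → ℚ → ℝ}

lemma inside_aux (h : IsVPath a ρ) (ha0 : 0 < a) (ha : a < 1/2) (N : ℕ) :
    ∀ z1 z0 z2 : ℚ, level z1 + level z2 ≤ N →
    InZ z1 → InZ z0 → InZ z2 → z1 < z0 → z0 < z2 →
    ρ z1 z2 ≤ (1-a)/a * (ρ z1 z0 + ρ z0 z2) := by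
  induction N with
  | zero =>
    intro z1 z0 z2 hN hz1 hz0 hz2 h10 h02
    have hK1 := K_one ha0 ha
    have hKpos := K_pos ha0 ha
    have h01 : 1 ≤ level z0 := by
      apply level_pos_ne hz0
      · intro he; rw [he] at h10; linarith [hz1.1]
      · intro he; rw [he] at h02; linarith [hz2.2.1]
    -- (iii) forced since levels of z1, z2 are 0
    have hstrict2 : level z2 < level z0 := by omega
    have hstrict1 : level z1 < level z0 := by omega
    have hrle : rnb z0 ≤ z2 := rnb_le hz2.2.2 hz0.2.2 h02 (by omega) h01
    have hse := se h ha0 ha hz1 hz0 hz2 (le_of_lt h10) h01 hrle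
    have e : ρ z0 z2 = a^(level z0) + ρ (rnb z0) z2 := r5' h hz0 hz2 h02 h01 hrle
    rw [e]
    have hexp : (1-a)/a * (ρ z1 z0 + (a^(level z0) + ρ (rnb z0) z2))
        = (1-a)/a * ρ z1 z0 + (1-a)/a * a^(level z0)
          + (1-a)/a * ρ (rnb z0) z2 := by ring
    rw [hexp]
    nlinarith [pow_pos ha0 (level z0)]
  | succ N IH =>
    intro z1 z0 z2 hN hz1 hz0 hz2 h10 h02
    have hK1 := K_one ha0 ha
    have hKpos := K_pos ha0 ha
    have h12 : z1 < z2 := lt_trans h10 h02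
    have h01 : 1 ≤ level z0 := by
      apply level_pos_ne hz0
      · intro he; rw [he] at h10; linarith [hz1.1]
      · intro he; rw [he] at h02; linarith [hz2.2.1]
    by_cases hi : level z0 ≤ level z1 ∧ level z2 ≤ level z1
    · -- (i)
      have h11 : 1 ≤ level z1 := by omega
      have hrlev := level_rnb_le hz1.2.2 rfl h11
      have hrle0 : rnb z1 ≤ z0 := rnb_le hz0.2.2 hz1.2.2 h10 hi.1 h11
      have e2 : ρ z1 z0 = a^(level z1) + ρ (rnb z1) z0 := r5' h hz1 hz0 h10 h11 hrle0
      have e1 : ρ z1 z2 = a^(level z1) + ρ (rnb z1) z2 :=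
        r5' h hz1 hz2 h12 h11 (le_trans hrle0 (le_of_lt h02))
      rcases eq_or_lt_of_le hrle0 with he | hlt
      · rw [e1, e2, he, vdiag h]
        have hnn := vnn h z0 z2 hz0 hz2
        have hexp : (1-a)/a * (a^(level z1) + 0 + ρ z0 z2)
            = (1-a)/a * a^(level z1) + (1-a)/a * ρ z0 z2 := by ring
        rw [hexp]
        nlinarith [pow_pos ha0 (level z1)]
      · have ih := IH (rnb z1) z0 z2 (by omega) (inZ_rnb hz1) hz0 hz2 hlt h02
        rw [e1, e2]
        have hexp : (1-a)/a * (a^(level z1) + ρ (rnb z1) z0 + ρ z0 z2)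
            = (1-a)/a * a^(level z1)
              + (1-a)/a * (ρ (rnb z1) z0 + ρ z0 z2) := by ring
        rw [hexp]
        nlinarith [pow_pos ha0 (level z1)]
    · by_cases hii : level z0 ≤ level z2 ∧ level z1 ≤ level z2
      · -- (ii)
        have h21 : 1 ≤ level z2 := by omega
        have hllev := level_lnb_le hz2.2.2 rfl h21
        have hlnb0 : z0 ≤ lnb z2 := le_lnb hz0.2.2 hz2.2.2 h02 hii.1 h21
        have e2 : ρ z0 z2 = ρ z0 (lnb z2) + a^(level z2) := r6' h hz0 hz2 h02 h21 hlnb0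
        have e1 : ρ z1 z2 = ρ z1 (lnb z2) + a^(level z2) :=
          r6' h hz1 hz2 h12 h21 (le_trans (le_of_lt h10) hlnb0)
        rcases eq_or_lt_of_le hlnb0 with he | hlt
        · rw [e1, e2, ← he, vdiag h]
          have hnn := vnn h z1 z0 hz1 hz0
          have hexp : (1-a)/a * (ρ z1 z0 + (0 + a^(level z2)))
              = (1-a)/a * ρ z1 z0 + (1-a)/a * a^(level z2) := by ring
          rw [hexp]
          nlinarith [pow_pos ha0 (level z2)]
        · have ih := IH z1 z0 (lnb z2) (by omega) hz1 hz0 (inZ_lnb hz2) h10 hlt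
          rw [e1, e2]
          have hexp : (1-a)/a * (ρ z1 z0 + (ρ z0 (lnb z2) + a^(level z2)))
              = (1-a)/a * (ρ z1 z0 + ρ z0 (lnb z2))
                + (1-a)/a * a^(level z2) := by ring
          rw [hexp]
          nlinarith [pow_pos ha0 (level z2)]
      · -- (iii)
        have hstrict1 : level z1 < level z0 := by omega
        have hstrict2 : level z2 < level z0 := by omega
        have hrle : rnb z0 ≤ z2 := rnb_le hz2.2.2 hz0.2.2 h02 (by omega) h01
        have hse := se h ha0 ha hz1 hz0 hz2 (le_of_lt h10) h01 hrle
        have e : ρ z0 z2 = a^(level z0) + ρ (rnb z0) z2 := r5' h hz0 hz2 h02 h01 hrle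
        rw [e]
        have hexp : (1-a)/a * (ρ z1 z0 + (a^(level z0) + ρ (rnb z0) z2))
            = (1-a)/a * ρ z1 z0 + (1-a)/a * a^(level z0)
              + (1-a)/a * ρ (rnb z0) z2 := by ring
        rw [hexp]
        nlinarith [pow_pos ha0 (level z0)]

lemma main_ineq (h : IsVPath a ρ) (ha0 : 0 < a) (ha : a < 1/2) :
    ∀ z0 z1 z2 : ℚ, InZ z0 → InZ z1 → InZ z2 →
    ρ z1 z2 ≤ (1-a)/a * (ρ z1 z0 + ρ z0 z2) := by
  have hK1 := K_one ha0 ha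
  have hKpos := K_pos ha0 ha
  have core : ∀ z0 z1 z2 : ℚ, InZ z0 → InZ z1 → InZ z2 → z1 < z2 →
      ρ z1 z2 ≤ (1-a)/a * (ρ z1 z0 + ρ z0 z2) := by
    intro z0 z1 z2 hz0 hz1 hz2 hlt
    rcases le_or_gt z0 z1 with hle | hgt
    · have hm := lemM h ha0 ha hz0 hz1 hz2 hle (le_of_lt hlt)
      have hnn := vnn h z1 z0 hz1 hz0
      have hexp : (1-a)/a * (ρ z1 z0 + ρ z0 z2)
          = (1-a)/a * ρ z1 z0 + (1-a)/a * ρ z0 z2 := by ring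
      rw [hexp]
      nlinarith
    · rcases le_or_gt z2 z0 with hle2 | hgt2
      · have hm := lemM' h ha0 ha hz1 hz2 hz0 (le_of_lt hlt) hle2
        have hnn := vnn h z0 z2 hz0 hz2
        have hs : ρ z1 z0 = ρ z0 z1 := vsym h _ _
        have hexp : (1-a)/a * (ρ z1 z0 + ρ z0 z2)
            = (1-a)/a * ρ z1 z0 + (1-a)/a * ρ z0 z2 := by ring
        rw [hexp]
        nlinarith
      · exact inside_aux h ha0 ha (level z1 + level z2) z1 z0 z2 le_rfl hz1 hz0 hz2 hgt hgt2
  intro z0 z1 z2 hz0 hz1 hz2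
  rcases lt_trichotomy z1 z2 with hlt | heq | hgt
  · exact core z0 z1 z2 hz0 hz1 hz2 hlt
  · rw [heq, vdiag h]
    have := vnn h z2 z0 hz2 hz0
    have := vnn h z0 z2 hz0 hz2
    have := vsym h z2 z0
    nlinarith
  · have := core z0 z2 z1 hz0 hz2 hz1 hgt
    rw [vsym h z1 z2, vsym h z1 z0, vsym h z0 z2]
    linarith [this, vsym h z2 z0, vsym h z0 z1]

end Rho8

end VPaux


/-- For every triple of distinct points of `Z`,
`ρ(z_1,z_2) ≤ ((1-a)/a)(ρ(z_1,z_0) + ρ(z_0,z_2))`; in particular for every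
`ε > 0` one may choose `a ∈ (0,1/2)` so that the V-path quasi-metric with
parameter `a` satisfies `ρ(z_1,z_2) ≤ (1+ε)(ρ(z_1,z_0) + ρ(z_0,z_2))`. -/
theorem vpath_relaxed_triangle (a : ℝ) (ha0 : 0 < a) (ha : a < 1 / 2)
    (ρ : ℚ → ℚ → ℝ) (hρ : IsVPath a ρ) :
    (∀ z0 z1 z2 : ℚ, InZ z0 → InZ z1 → InZ z2 →
      z0 ≠ z1 → z0 ≠ z2 → z1 ≠ z2 →
      ρ z1 z2 ≤ ((1 - a) / a) * (ρ z1 z0 + ρ z0 z2)) ∧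
    (∀ ε : ℝ, 0 < ε → ∃ a' : ℝ, 0 < a' ∧ a' < 1 / 2 ∧
      ∀ ρ' : ℚ → ℚ → ℝ, IsVPath a' ρ' →
        ∀ z0 z1 z2 : ℚ, InZ z0 → InZ z1 → InZ z2 →
          z0 ≠ z1 → z0 ≠ z2 → z1 ≠ z2 →
          ρ' z1 z2 ≤ (1 + ε) * (ρ' z1 z0 + ρ' z0 z2)) := by
  constructor
  · intro z0 z1 z2 hz0 hz1 hz2 _ _ _
    exact VPaux.main_ineq hρ ha0 ha z0 z1 z2 hz0 hz1 hz2
  · intro ε hε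
    refine ⟨1/(2+ε), by positivity, ?_, ?_⟩
    · rw [div_lt_div_iff₀ (by linarith) (by norm_num)]
      linarith
    · intro ρ' hρ' z0 z1 z2 hz0 hz1 hz2 _ _ _
      have h0 : (0:ℝ) < 1/(2+ε) := by positivity
      have h2 : (1:ℝ)/(2+ε) < 1/2 := by
        rw [div_lt_div_iff₀ (by linarith) (by norm_num)]
        linarith
      have key := VPaux.main_ineq hρ' h0 h2 z0 z1 z2 hz0 hz1 hz2
      have hK : (1 - 1/(2+ε))/(1/(2+ε)) = 1 + ε := by
        have hne : (2:ℝ)+ε ≠ 0 := by linarith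
        field_simp
        ring
      rw [hK] at key
      exact key
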